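/- Let r be a positive integer and suppose the symmetric n×n real matrices B_1,…,B_k are all r-diagonal, i.e., the (i,j) entry of each B_l vanishes unless |i − j| < r. If there exists a positive semidefinite matrix M with ⟨B_i, M⟩ = α_i ∈ ℝ for i = 1,…,k, then there exists a positive semidefinite matrix M₀ with ⟨B_i, M₀⟩ = α_i for i = 1,…,k and rank(M₀) ≤ r. -/

import Mathlib

open Matrix

/-- Trace inner product on square matrices: ⟨X, Y⟩ = tr(XY). -/
noncomputable def ip {m : ℕ} (X Y : Matrix (Fin m) (Fin m) ℝ) : ℝ := (X * Y).trace

open Submodule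

local notation "⟪" x ", " y "⟫" => @inner ℝ _ _ x y

open scoped MatrixOrder in
lemma gram_realize {m : ℕ} (K : Matrix (Fin m) (Fin m) ℝ) (hK : K.PosSemidef) :
    ∃ w : Fin m → EuclideanSpace ℝ (Fin m), ∀ i j, ⟪w i, w j⟫ = K i j := by
  set S := CFC.sqrt K with hS
  have hsym : S.IsHermitian := IsSelfAdjoint.of_nonneg (CFC.sqrt_nonneg K)
  refine ⟨fun i => (WithLp.equiv 2 (Fin m → ℝ)).symm (fun t => S t i), fun i j => ?_⟩
  have : K i j = (S * S) i j := by rw [CFC.sqrt_mul_sqrt_self K (nonneg_iff_posSemidef.mpr hK)]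
  rw [this, Matrix.mul_apply]
  simp only [PiLp.inner_apply, RCLike.inner_apply, conj_trivial, WithLp.equiv_symm_apply, WithLp.ofLp_toLp]
  exact Finset.sum_congr rfl fun t _ => by rw [show S i t = S t i from (congrFun (congrFun hsym i) t).symm.trans rfl, mul_comm]

lemma ext_vector {r p : ℕ} (hpr : p < r) (u : Fin p → EuclideanSpace ℝ (Fin r))
    (K : Matrix (Fin (p+1)) (Fin (p+1)) ℝ) (hK : K.PosSemidef)
    (hu : ∀ i j : Fin p, ⟪u i, u j⟫ = K i.castSucc j.castSucc) :
    ∃ x : EuclideanSpace ℝ (Fin r), (∀ i, ⟪u i, x⟫ = K i.castSucc (Fin.last p)) ∧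
      ⟪x, x⟫ = K (Fin.last p) (Fin.last p) := by
  obtain ⟨w, hw⟩ := gram_realize K hK
  set w' : Fin p → EuclideanSpace ℝ (Fin (p+1)) := fun i => w i.castSucc with hw'
  set wl := w (Fin.last p) with hwl
  set V : Submodule ℝ (EuclideanSpace ℝ (Fin (p+1))) := span ℝ (Set.range w') with hV
  set q : EuclideanSpace ℝ (Fin (p+1)) := (orthogonalProjection V wl : EuclideanSpace ℝ (Fin (p+1))) with hq
  have hqV : (q : EuclideanSpace ℝ (Fin (p+1))) ∈ V := coe_mem _
  obtain ⟨y, hy⟩ := (mem_span_range_iff_exists_fun ℝ).mp hqV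
  set x₀ : EuclideanSpace ℝ (Fin r) := ∑ j, y j • u j with hx₀
  have horth : ∀ i, ⟪w' i, q⟫ = ⟪w' i, wl⟫ := by
    intro i
    have h0 : ⟪wl - q, w' i⟫ = 0 :=
      V.starProjection_inner_eq_zero wl (w' i) (subset_span (Set.mem_range_self i))
    have h1 : ⟪wl - q, w' i⟫ = ⟪wl, w' i⟫ - ⟪q, w' i⟫ := inner_sub_left wl q (w' i)
    have h2 : ⟪w' i, q⟫ = ⟪q, w' i⟫ := real_inner_comm _ _
    have h3 : ⟪w' i, wl⟫ = ⟪wl, w' i⟫ := real_inner_comm _ _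
    linarith
  have hix₀ : ∀ i, ⟪u i, x₀⟫ = K i.castSucc (Fin.last p) := by
    intro i
    rw [hx₀, inner_sum]
    have : ∀ j ∈ Finset.univ, ⟪u i, y j • u j⟫ = ⟪w' i, y j • w' j⟫ := by
      intro j _
      rw [real_inner_smul_right, real_inner_smul_right, hu i j, hw']
      simp [hw]
    rw [Finset.sum_congr rfl this, ← inner_sum, hy, horth i]
    exact hw i.castSucc (Fin.last p)
  have hx₀n : ⟪x₀, x₀⟫ = ⟪q, q⟫ := by
    rw [hx₀, inner_sum]
    conv_rhs => rw [← hy, inner_sum]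
    refine Finset.sum_congr rfl fun j _ => ?_
    rw [real_inner_smul_right, real_inner_smul_right, sum_inner, sum_inner]
    congr 1
    refine Finset.sum_congr rfl fun i _ => ?_
    rw [real_inner_smul_left, real_inner_smul_left, hu i j, hw']
    simp [hw]
  have hqle : ⟪q, q⟫ ≤ K (Fin.last p) (Fin.last p) := by
    have h0 : ⟪wl - q, q⟫ = 0 := V.starProjection_inner_eq_zero wl q hqV
    have e1 : wl = q + (wl - q) := by abel
    have h4 : ⟪wl, wl⟫ = ⟪q + (wl - q), q + (wl - q)⟫ := by rw [← e1]
    have h5 : ⟪q + (wl - q), q + (wl - q)⟫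
        = ⟪q, q⟫ + ⟪q, wl - q⟫ + (⟪wl - q, q⟫ + ⟪wl - q, wl - q⟫) := by
      simp only [inner_add_left, inner_add_right]
      try ring
    have h6 : ⟪q, wl - q⟫ = ⟪wl - q, q⟫ := real_inner_comm _ _
    have h7 : (0:ℝ) ≤ ⟪wl - q, wl - q⟫ := real_inner_self_nonneg
    have h8 : ⟪wl, wl⟫ = K (Fin.last p) (Fin.last p) := hw _ _
    linarith
  set U : Submodule ℝ (EuclideanSpace ℝ (Fin r)) := span ℝ (Set.range u) with hU
  have hUlt : U ≠ ⊤ := by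
    intro h
    have h1 : Module.finrank ℝ U ≤ p := by
      simpa [Set.finrank] using finrank_range_le_card (R := ℝ) u
    have h2 : Module.finrank ℝ (EuclideanSpace ℝ (Fin r)) = r := finrank_euclideanSpace_fin
    rw [h, finrank_top, h2] at h1
    omega
  have : Uᗮ ≠ ⊥ := fun h => hUlt (Submodule.orthogonal_eq_bot_iff.mp h)
  obtain ⟨e, heU, he0⟩ := Submodule.ne_bot_iff _ |>.mp this
  have hx₀U : x₀ ∈ U := Submodule.sum_mem _ fun j _ =>
    Submodule.smul_mem _ _ (subset_span (Set.mem_range_self j))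
  set c : ℝ := Real.sqrt (K (Fin.last p) (Fin.last p) - ⟪q, q⟫) / ‖e‖ with hc
  have heo : ⟪x₀, e⟫ = 0 := Submodule.inner_right_of_mem_orthogonal hx₀U heU
  have heo' : ⟪e, x₀⟫ = 0 := by rw [real_inner_comm]; exact heo
  refine ⟨x₀ + c • e, fun i => ?_, ?_⟩
  · have hie : ⟪u i, e⟫ = 0 :=
      Submodule.inner_right_of_mem_orthogonal (subset_span (Set.mem_range_self i)) heU
    rw [inner_add_right, real_inner_smul_right, hie, hix₀ i]; ring
  · have h5 : ⟪x₀ + c • e, x₀ + c • e⟫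
        = ⟪x₀, x₀⟫ + c * ⟪x₀, e⟫ + (c * ⟪e, x₀⟫ + c * (c * ⟪e, e⟫)) := by
      simp only [inner_add_left, inner_add_right, real_inner_smul_left,
        real_inner_smul_right]
      try ring
    have hen : ⟪e, e⟫ = ‖e‖ ^ 2 := real_inner_self_eq_norm_sq e
    have hne : ‖e‖ ≠ 0 := norm_ne_zero_iff.mpr he0
    have hD : (0:ℝ) ≤ K (Fin.last p) (Fin.last p) - ⟪q, q⟫ := by linarith
    have hsq : Real.sqrt (K (Fin.last p) (Fin.last p) - ⟪q, q⟫)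
        * Real.sqrt (K (Fin.last p) (Fin.last p) - ⟪q, q⟫)
        = K (Fin.last p) (Fin.last p) - ⟪q, q⟫ := Real.mul_self_sqrt hD
    have hgs : c * (c * ⟪e, e⟫) = K (Fin.last p) (Fin.last p) - ⟪q, q⟫ := by
      calc c * (c * ⟪e, e⟫)
          = (Real.sqrt (K (Fin.last p) (Fin.last p) - ⟪q, q⟫)
            * Real.sqrt (K (Fin.last p) (Fin.last p) - ⟪q, q⟫)) * (‖e‖^2 / ‖e‖^2) := by
            rw [hen, hc]; ring
        _ = K (Fin.last p) (Fin.last p) - ⟪q, q⟫ := by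
            rw [hsq, div_self (pow_ne_zero 2 hne), mul_one]
    rw [h5, heo, heo', hx₀n, hgs]; ring

lemma gram_band {r n : ℕ} (hr : 0 < r) (M : Matrix (Fin n) (Fin n) ℝ) (hM : M.PosSemidef) :
    ∃ h : Fin n → EuclideanSpace ℝ (Fin r),
      ∀ i j : Fin n, (j:ℕ) < i + r → (i:ℕ) < j + r → ⟪h i, h j⟫ = M i j := by
  have hsymm : ∀ i j : Fin n, M j i = M i j := by
    intro i j
    exact congrFun (congrFun hM.1 i) j
  have key : ∀ m, m ≤ n → ∃ h : Fin n → EuclideanSpace ℝ (Fin r),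
      ∀ i j : Fin n, (i:ℕ) < m → (j:ℕ) < m → (j:ℕ) < i + r → (i:ℕ) < j + r →
        ⟪h i, h j⟫ = M i j := by
    intro m
    induction m with
    | zero => exact fun _ => ⟨0, fun i j hi _ _ _ => by omega⟩
    | succ m ih =>
      intro hm1
      obtain ⟨h, hh⟩ := ih (by omega)
      set s := min m (r-1) with hs
      have hsm : s ≤ m := min_le_left _ _
      have hsr : s < r := by omega
      set i₀ : Fin n := ⟨m, by omega⟩ with hi₀
      set f : Fin (s+1) → Fin n := fun t => ⟨m - s + t, by have := t.isLt; omega⟩ with hf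
      have hflast : f (Fin.last s) = i₀ := by
        apply Fin.ext
        simp [hf, hi₀]
        omega
      set K : Matrix (Fin (s+1)) (Fin (s+1)) ℝ := M.submatrix f f with hK
      have hKpsd : K.PosSemidef := hM.submatrix f
      set u : Fin s → EuclideanSpace ℝ (Fin r) := fun t => h (f t.castSucc) with hu
      have huK : ∀ a b : Fin s, ⟪u a, u b⟫ = K a.castSucc b.castSucc := by
        intro a b
        have ha := a.isLt; have hb := b.isLt
        have e1 : ((f a.castSucc : Fin n) : ℕ) = m - s + a := rfl
        have e2 : ((f b.castSucc : Fin n) : ℕ) = m - s + b := rfl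
        rw [hu]
        show ⟪h (f a.castSucc), h (f b.castSucc)⟫ = K a.castSucc b.castSucc
        rw [hh (f a.castSucc) (f b.castSucc) (by omega) (by omega) (by omega) (by omega)]
        rfl
      obtain ⟨x, hx1, hx2⟩ := ext_vector hsr u K hKpsd huK
      refine ⟨Function.update h i₀ x, fun i j hi hj hb1 hb2 => ?_⟩
      by_cases him : (i:ℕ) = m <;> by_cases hjm : (j:ℕ) = m
      · have hieq : i = i₀ := Fin.ext him
        have hjeq : j = i₀ := Fin.ext hjm
        rw [hieq, hjeq, Function.update_self, hx2, hK, Matrix.submatrix_apply, hflast]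
      · -- i = i₀, j < m
        have hieq : i = i₀ := Fin.ext him
        have hjne : j ≠ i₀ := fun hc => hjm (by rw [hc])
        have hjlt : (j:ℕ) < m := by omega
        have hjge : m - s ≤ (j:ℕ) := by omega
        set t : Fin s := ⟨(j:ℕ) - (m - s), by omega⟩ with ht
        have hft : f t.castSucc = j := by
          apply Fin.ext
          show m - s + ((j:ℕ) - (m - s)) = j
          omega
        have hut : u t = h j := congrArg h hft
        rw [hieq, Function.update_self, Function.update_of_ne hjne, real_inner_comm, ← hut,
          hx1 t, hK, Matrix.submatrix_apply, hft, hflast]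
        exact hsymm i₀ j
      · -- j = i₀, i < m
        have hjeq : j = i₀ := Fin.ext hjm
        have hine : i ≠ i₀ := fun hc => him (by rw [hc])
        have hilt : (i:ℕ) < m := by omega
        have hige : m - s ≤ (i:ℕ) := by omega
        set t : Fin s := ⟨(i:ℕ) - (m - s), by omega⟩ with ht
        have hft : f t.castSucc = i := by
          apply Fin.ext
          show m - s + ((i:ℕ) - (m - s)) = i
          omega
        have hut : u t = h i := congrArg h hft
        rw [hjeq, Function.update_self, Function.update_of_ne hine, ← hut,
          hx1 t, hK, Matrix.submatrix_apply, hft, hflast]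
      · have hine : i ≠ i₀ := fun hc => him (by rw [hc])
        have hjne : j ≠ i₀ := fun hc => hjm (by rw [hc])
        rw [Function.update_of_ne hine, Function.update_of_ne hjne]
        exact hh i j (by omega) (by omega) hb1 hb2
  obtain ⟨h, hh⟩ := key n le_rfl
  exact ⟨h, fun i j hb1 hb2 => hh i j i.isLt j.isLt hb1 hb2⟩

/-- Barvinok: if the symmetric matrices `B₁, …, B_k` are all `r`-diagonal (entries vanish
unless `|i - j| < r`) and the system `⟨B_i, M⟩ = α_i`, `M ⪰ 0` is solvable, then it has a
solution of rank at most `r`. -/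
theorem low_rank_solution_of_r_diagonal (r n k : ℕ) (hr : 0 < r)
    (B : Fin k → Matrix (Fin n) (Fin n) ℝ) (hB : ∀ l, (B l).IsSymm)
    (hdiag : ∀ (l : Fin k) (i j : Fin n), B l i j ≠ 0 → |(i : ℤ) - (j : ℤ)| < r)
    (α : Fin k → ℝ)
    (hex : ∃ M : Matrix (Fin n) (Fin n) ℝ, M.PosSemidef ∧ ∀ i, ip (B i) M = α i) :
    ∃ M₀ : Matrix (Fin n) (Fin n) ℝ, M₀.PosSemidef ∧ (∀ i, ip (B i) M₀ = α i) ∧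
      M₀.rank ≤ r := by
  obtain ⟨M, hM, hα⟩ := hex
  obtain ⟨h, hh⟩ := gram_band hr M hM
  set A : Matrix (Fin r) (Fin n) ℝ := Matrix.of (fun t i => h i t) with hA
  refine ⟨Aᴴ * A, posSemidef_conjTranspose_mul_self A, ?_, ?_⟩
  · have hent : ∀ i j : Fin n, (Aᴴ * A) i j = ⟪h i, h j⟫ := by
      intro i j
      rw [Matrix.mul_apply]
      simp only [PiLp.inner_apply, RCLike.inner_apply, conj_trivial,
        Matrix.conjTranspose_apply, hA, Matrix.of_apply, star_trivial]
      exact Finset.sum_congr rfl fun _ _ => mul_comm _ _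
    intro l
    rw [← hα l]
    unfold ip
    simp only [Matrix.trace, Matrix.diag]
    refine Finset.sum_congr rfl fun i _ => ?_
    rw [Matrix.mul_apply, Matrix.mul_apply]
    refine Finset.sum_congr rfl fun j _ => ?_
    by_cases hb : B l i j = 0
    · rw [hb, zero_mul, zero_mul]
    · have hd := hdiag l i j hb
      rw [abs_lt] at hd
      have h1 : (i:ℕ) < (j:ℕ) + r := by omega
      have h2 : (j:ℕ) < (i:ℕ) + r := by omega
      rw [hent j i, hh j i h1 h2]
  · calc (Aᴴ * A).rank = A.rank := Matrix.rank_conjTranspose_mul_self A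
      _ ≤ Fintype.card (Fin r) := Matrix.rank_le_card_height A
      _ = r := Fintype.card_fin r
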